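/- Define p_k^{(n)} := ∑_{i_1+...+i_k = n, i_m ≥ 1} ∏_{m=1}^k i_m / binom(I_m+1, 2), where I_m = i_1+...+i_m. Then these probabilities satisfy the recurrence binom(n+1,2)·p_k^{(n)} − 2·binom(n,2)·p_k^{(n−1)} + binom(n−1,2)·p_k^{(n−2)} = p_{k−1}^{(n−1)} for all n ≥ 2 and k ≥ 1. -/

import Mathlib

open Finset

/-- The partial sum `I_m = i_0 + ... + i_m` (0-indexed). -/
def partialSum {k : ℕ} (i : Fin k → ℕ) (m : Fin k) : ℕ :=
  ∑ j ∈ Finset.univ.filter (fun j : Fin k => j ≤ m), i j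

/-- `p n k = P(f₀(Tₙ) = k + 2)`, Buchta's explicit formula: the sum over `k`-tuples
of positive integers summing to `n` of `∏_m i_m / binom(I_m + 1, 2)`. -/
noncomputable def chainProb (n k : ℕ) : ℚ :=
  ∑ i ∈ (Fintype.piFinset fun _ : Fin k => Finset.range (n + 1)).filter
      (fun i : Fin k → ℕ => (∀ m, 1 ≤ i m) ∧ ∑ m, i m = n),
    ∏ m : Fin k, (i m : ℚ) / (Nat.choose (partialSum i m + 1) 2 : ℚ)

lemma partialSum_last {k : ℕ} (i : Fin (k+1) → ℕ) :
    partialSum i (Fin.last k) = ∑ m, i m := by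
  unfold partialSum
  congr 1
  ext j
  simp [Fin.le_last]

lemma partialSum_castSucc {k : ℕ} (i : Fin (k+1) → ℕ) (m : Fin k) :
    partialSum i m.castSucc = partialSum (Fin.init i) m := by
  unfold partialSum
  have h : (univ.filter fun j : Fin (k+1) => j ≤ m.castSucc)
      = (univ.filter fun j : Fin k => j ≤ m).map
          ⟨Fin.castSucc, Fin.castSucc_injective k⟩ := by
    ext j
    simp only [mem_map, mem_filter, mem_univ, true_and, Function.Embedding.coeFn_mk]
    constructor
    · intro hj
      have hjv : (j : ℕ) ≤ (m : ℕ) := hj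
      refine ⟨⟨(j : ℕ), by omega⟩, ?_, ?_⟩
      · exact hjv
      · ext; simp
    · rintro ⟨j', hj', rfl⟩
      exact hj'
  rw [h, Finset.sum_map]
  rfl

lemma chainProb_eq_sum (N n k : ℕ) (hN : n ≤ N) :
    chainProb n k = ∑ i ∈ (Fintype.piFinset fun _ : Fin k => Finset.range (N + 1)).filter
      (fun i : Fin k → ℕ => (∀ m, 1 ≤ i m) ∧ ∑ m, i m = n),
    ∏ m : Fin k, (i m : ℚ) / (Nat.choose (partialSum i m + 1) 2 : ℚ) := by
  unfold chainProb
  congr 1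
  ext i
  simp only [mem_filter, Fintype.mem_piFinset, mem_range]
  constructor
  · rintro ⟨h1, h2, h3⟩
    exact ⟨fun m => by have := h1 m; omega, h2, h3⟩
  · rintro ⟨h1, h2, h3⟩
    refine ⟨fun m => ?_, h2, h3⟩
    have : i m ≤ ∑ m', i m' := Finset.single_le_sum (fun _ _ => Nat.zero_le _) (mem_univ m)
    omega

lemma chainProb_split (n k : ℕ) :
    (Nat.choose (n + 1) 2 : ℚ) * chainProb n (k + 1)
      = ∑ j ∈ Finset.Icc 1 n, (j : ℚ) * chainProb (n - j) k := by
  rcases Nat.eq_zero_or_pos n with rfl | hn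
  · simp [chainProb]
  have hC : ((n + 1).choose 2 : ℚ) ≠ 0 := by
    have : 0 < (n + 1).choose 2 := Nat.choose_pos (by omega)
    exact_mod_cast this.ne'
  -- rewrite RHS inner chainProbs with ambient range (n+1)
  have hrhs : ∀ j ∈ Finset.Icc 1 n, (j : ℚ) * chainProb (n - j) k
      = ∑ i' ∈ (Fintype.piFinset fun _ : Fin k => Finset.range (n + 1)).filter
          (fun i' : Fin k → ℕ => (∀ m, 1 ≤ i' m) ∧ ∑ m, i' m = n - j),
        (j : ℚ) * ∏ m : Fin k, (i' m : ℚ) / (Nat.choose (partialSum i' m + 1) 2 : ℚ) := by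
    intro j hj
    rw [chainProb_eq_sum n (n - j) k (by omega), Finset.mul_sum]
  rw [Finset.sum_congr rfl hrhs, Finset.sum_sigma']
  -- rewrite LHS
  unfold chainProb
  rw [Finset.mul_sum]
  rw [Finset.sum_congr rfl (g := fun i : Fin (k+1) → ℕ =>
      (i (Fin.last k) : ℚ) *
        ∏ m : Fin k, (Fin.init i m : ℚ) / (Nat.choose (partialSum (Fin.init i) m + 1) 2 : ℚ))
    (fun i hi => ?_)]
  swap
  · simp only [mem_filter, Fintype.mem_piFinset, mem_range] at hi
    obtain ⟨h1, h2, h3⟩ := hi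
    rw [Fin.prod_univ_castSucc]
    have hlast : partialSum i (Fin.last k) = n := by rw [partialSum_last, h3]
    rw [hlast]
    have : ∀ m : Fin k, (i m.castSucc : ℚ) / (Nat.choose (partialSum i m.castSucc + 1) 2 : ℚ)
        = (Fin.init i m : ℚ) / (Nat.choose (partialSum (Fin.init i) m + 1) 2 : ℚ) := by
      intro m; rw [partialSum_castSucc]; rfl
    rw [Finset.prod_congr rfl (fun m _ => this m)]
    rw [mul_comm ((Nat.choose (n+1) 2 : ℚ)) _, mul_assoc, div_mul_cancel₀ _ hC, mul_comm]
  -- now the bijection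
  refine Finset.sum_nbij' (fun i => ⟨i (Fin.last k), Fin.init i⟩)
    (fun x => Fin.snoc x.2 x.1) ?_ ?_ ?_ ?_ ?_
  · rintro i hi
    simp only [mem_filter, Fintype.mem_piFinset, mem_range] at hi
    obtain ⟨h1, h2, h3⟩ := hi
    simp only [Finset.mem_sigma, Finset.mem_Icc, mem_filter, Fintype.mem_piFinset, mem_range]
    have hle : i (Fin.last k) ≤ n := by
      have : i (Fin.last k) ≤ ∑ m, i m :=
        Finset.single_le_sum (fun _ _ => Nat.zero_le _) (mem_univ _)
      omega
    refine ⟨⟨h2 _, hle⟩, fun m => h1 m.castSucc, fun m => h2 m.castSucc, ?_⟩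
    have := Fin.sum_univ_castSucc i
    rw [this] at h3
    have : ∑ m : Fin k, Fin.init i m = ∑ m : Fin k, i m.castSucc := rfl
    omega
  · rintro ⟨j, i'⟩ hx
    simp only [Finset.mem_sigma, Finset.mem_Icc, mem_filter, Fintype.mem_piFinset,
      mem_range] at hx
    obtain ⟨⟨hj1, hj2⟩, h1, h2, h3⟩ := hx
    simp only [mem_filter, Fintype.mem_piFinset, mem_range]
    refine ⟨fun m => ?_, fun m => ?_, ?_⟩
    · refine Fin.lastCases ?_ (fun m => ?_) m
      · rw [Fin.snoc_last]; omega
      · rw [Fin.snoc_castSucc]; exact h1 m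
    · refine Fin.lastCases ?_ (fun m => ?_) m
      · rw [Fin.snoc_last]; exact hj1
      · rw [Fin.snoc_castSucc]; exact h2 m
    · rw [Fin.sum_univ_castSucc]
      simp only [Fin.snoc_castSucc, Fin.snoc_last]
      omega
  · intro i _; exact Fin.snoc_init_self i
  · rintro ⟨j, i'⟩ _
    simp [Fin.snoc_last, Fin.init_snoc]
  · intro i _
    simp [Fin.snoc_last, Fin.init_snoc]

lemma chainProb_split' (n k : ℕ) :
    (Nat.choose (n + 1) 2 : ℚ) * chainProb n (k + 1)
      = ∑ m ∈ Finset.range n, ((n - m : ℕ) : ℚ) * chainProb m k := by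
  rw [chainProb_split]
  refine Finset.sum_nbij' (fun j => n - j) (fun m => n - m) ?_ ?_ ?_ ?_ ?_
  · intro j hj; simp only [Finset.mem_Icc] at hj; simp only [Finset.mem_range]; omega
  · intro m hm; simp only [Finset.mem_range] at hm; simp only [Finset.mem_Icc]; omega
  · intro j hj; simp only [Finset.mem_Icc] at hj; omega
  · intro m hm; simp only [Finset.mem_range] at hm; omega
  · intro j hj
    simp only [Finset.mem_Icc] at hj
    have : n - (n - j) = j := by omega
    rw [this]

lemma chainProb_diff (n k : ℕ) (hn : 1 ≤ n) :
    (Nat.choose (n + 1) 2 : ℚ) * chainProb n (k + 1)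
      - (Nat.choose n 2 : ℚ) * chainProb (n - 1) (k + 1)
      = ∑ m ∈ Finset.range n, chainProb m k := by
  obtain ⟨n', rfl⟩ : ∃ n', n = n' + 1 := ⟨n - 1, by omega⟩
  rw [chainProb_split', Nat.add_sub_cancel]
  have h2 := chainProb_split' n' k
  rw [h2]
  rw [Finset.sum_range_succ, Finset.sum_range_succ (f := fun m => chainProb m k)]
  have hcong : ∀ m ∈ Finset.range n',
      ((n' + 1 - m : ℕ) : ℚ) * chainProb m k - ((n' - m : ℕ) : ℚ) * chainProb m k
        = chainProb m k := by
    intro m hm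
    simp only [Finset.mem_range] at hm
    have h1 : n' + 1 - m = (n' - m) + 1 := by omega
    rw [h1]
    push_cast
    ring
  have key : ∑ m ∈ Finset.range n',
      (((n' + 1 - m : ℕ) : ℚ) * chainProb m k - ((n' - m : ℕ) : ℚ) * chainProb m k)
      = ∑ m ∈ Finset.range n', chainProb m k := Finset.sum_congr rfl hcong
  rw [Finset.sum_sub_distrib] at key
  have h1 : n' + 1 - n' = 1 := by omega
  rw [h1]
  push_cast
  linarith

/-- The recurrence relation for the probabilities `p_k^{(n)}`:
`binom(n+1,2) p_k^{(n)} - 2 binom(n,2) p_k^{(n-1)} + binom(n-1,2) p_k^{(n-2)} = p_{k-1}^{(n-1)}`. -/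
theorem chainProb_recurrence (n k : ℕ) (hn : 2 ≤ n) (hk : 1 ≤ k) :
    (Nat.choose (n + 1) 2 : ℚ) * chainProb n k
      - 2 * (Nat.choose n 2 : ℚ) * chainProb (n - 1) k
      + (Nat.choose (n - 1) 2 : ℚ) * chainProb (n - 2) k
      = chainProb (n - 1) (k - 1) := by
  obtain ⟨k', rfl⟩ : ∃ k', k = k' + 1 := ⟨k - 1, by omega⟩
  have h1 := chainProb_diff n k' (by omega)
  have h2 := chainProb_diff (n - 1) k' (by omega)
  rw [show n - 1 + 1 = n by omega, show n - 1 - 1 = n - 2 by omega] at h2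
  have h3 : ∑ m ∈ Finset.range n, chainProb m k'
      = ∑ m ∈ Finset.range (n - 1), chainProb m k' + chainProb (n - 1) k' := by
    rw [show n = (n - 1) + 1 by omega, Finset.sum_range_succ]
    simp [show n - 1 + 1 - 1 = n - 1 by omega]
  simp only [Nat.add_sub_cancel]
  linarith
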